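/- Let f_1,...,f_m : ℝ → ℝ be convex functions and F = max_i f_i their pointwise maximum with minimizer r*. Then there exists an index i such that f_i(r*) = F(r*) and f_i(r) ≥ f_i(r*) for all r ≥ r*, and there exists an index j such that f_j(r*) = F(r*) and f_j(r) ≥ f_j(r*) for all r ≤ r*. -/

import Mathlib

lemma aux_right
    {m : ℕ} (hm : 0 < m)
    (f : Fin m → ℝ → ℝ) (hconv : ∀ i, ConvexOn ℝ Set.univ (f i))
    (F : ℝ → ℝ)
    (hF : ∀ r, F r =
      (Finset.univ : Finset (Fin m)).sup'
        (Finset.univ_nonempty_iff.2 ⟨⟨0, hm⟩⟩) (fun i => f i r))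
    (rstar : ℝ) (hmin : ∀ r : ℝ, F rstar ≤ F r) :
    ∃ i, f i rstar = F rstar ∧ ∀ r ≥ rstar, f i rstar ≤ f i r := by
  have hle : ∀ i r, f i r ≤ F r := by
    intro i r
    rw [hF r]
    exact Finset.le_sup' (fun i => f i r) (Finset.mem_univ i)
  by_contra h
  push_neg at h
  have key : ∀ i : Fin m, ∃ δ > (0:ℝ), ∀ t, rstar < t → t < rstar + δ →
      f i t < F rstar := by
    intro i
    rcases lt_or_eq_of_le (hle i rstar) with hlt | heq
    · -- inactive index
      set d : ℝ := |f i (rstar + 1) - f i rstar| + 1 with hd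
      have hdpos : 0 < d := by positivity
      refine ⟨min 1 ((F rstar - f i rstar) / d), lt_min one_pos (div_pos (by linarith) hdpos), ?_⟩
      intro t ht1 ht2
      set μ : ℝ := t - rstar with hμ
      have hμpos : 0 < μ := by simp [hμ]; linarith
      have hμlt1 : μ < 1 := by
        have := lt_of_lt_of_le (by linarith : μ < min 1 ((F rstar - f i rstar) / d))
          (min_le_left _ _)
        linarith
      have hμd : μ * d < F rstar - f i rstar := by
        have h1 : μ < (F rstar - f i rstar) / d :=
          lt_of_lt_of_le (by linarith : μ < min 1 ((F rstar - f i rstar) / d))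
            (min_le_right _ _)
        calc μ * d < ((F rstar - f i rstar) / d) * d := by
              exact mul_lt_mul_of_pos_right h1 hdpos
          _ = F rstar - f i rstar := by field_simp
      have hcvx := (hconv i).2 (Set.mem_univ rstar) (Set.mem_univ (rstar + 1))
        (by linarith : (0:ℝ) ≤ 1 - μ) (le_of_lt hμpos) (by ring)
      have harg : (1 - μ) • rstar + μ • (rstar + 1) = t := by
        simp only [smul_eq_mul]; ring
      rw [harg] at hcvx
      simp only [smul_eq_mul] at hcvx
      have habs : f i (rstar + 1) - f i rstar ≤ d - 1 := by
        have := le_abs_self (f i (rstar + 1) - f i rstar)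
        simp [hd]; linarith
      nlinarith [hμpos, hμd, habs]
    · -- active index
      obtain ⟨r, hr, hfr⟩ := h i heq
      have hrlt : rstar < r := by
        rcases lt_or_eq_of_le hr with h' | h'
        · exact h'
        · exfalso; rw [← h'] at hfr; linarith
      refine ⟨r - rstar, by linarith, ?_⟩
      intro t ht1 ht2
      set μ : ℝ := (t - rstar) / (r - rstar) with hμ
      have hden : 0 < r - rstar := by linarith
      have hμpos : 0 < μ := div_pos (by linarith) hden
      have hμlt1 : μ < 1 := (div_lt_one hden).2 (by linarith)
      have hcvx := (hconv i).2 (Set.mem_univ rstar) (Set.mem_univ r)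
        (by linarith : (0:ℝ) ≤ 1 - μ) (le_of_lt hμpos) (by ring)
      have harg : (1 - μ) • rstar + μ • r = t := by
        simp only [smul_eq_mul]
        rw [hμ]; field_simp [hden.ne']
        ring
      rw [harg] at hcvx
      simp only [smul_eq_mul] at hcvx
      rw [heq] at hfr
      nlinarith [hμpos, hμlt1, hfr, hcvx]
  choose δ hδpos hδ using key
  have hne : (Finset.univ : Finset (Fin m)).Nonempty :=
    Finset.univ_nonempty_iff.2 ⟨⟨0, hm⟩⟩
  set D : ℝ := Finset.univ.inf' hne δ with hD
  have hDpos : 0 < D := by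
    rw [hD, Finset.lt_inf'_iff]
    intro i _
    exact hδpos i
  set t : ℝ := rstar + D / 2 with ht
  have hlt : F t < F rstar := by
    rw [hF t, Finset.sup'_lt_iff]
    intro i _
    refine hδ i t (by simp [ht]; linarith) ?_
    have : D ≤ δ i := Finset.inf'_le δ (Finset.mem_univ i)
    simp only [ht]; linarith
  exact absurd (hmin t) (not_le.2 hlt)

theorem exists_identifiable_indices
    {m : ℕ} (hm : 0 < m)
    (f : Fin m → ℝ → ℝ) (hconv : ∀ i, ConvexOn ℝ Set.univ (f i))
    (F : ℝ → ℝ)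
    (hF : ∀ r, F r =
      (Finset.univ : Finset (Fin m)).sup'
        (Finset.univ_nonempty_iff.2 ⟨⟨0, hm⟩⟩) (fun i => f i r))
    (rstar : ℝ) (hmin : ∀ r : ℝ, F rstar ≤ F r) :
    (∃ i, f i rstar = F rstar ∧ ∀ r ≥ rstar, f i rstar ≤ f i r) ∧
      (∃ j, f j rstar = F rstar ∧ ∀ r ≤ rstar, f j rstar ≤ f j r) := by
  constructor
  · exact aux_right hm f hconv F hF rstar hmin
  · -- reflect through negation
    set g : Fin m → ℝ → ℝ := fun i x => f i (-x) with hg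
    have hgconv : ∀ i, ConvexOn ℝ Set.univ (g i) := by
      intro i
      refine ⟨convex_univ, ?_⟩
      intro x _ y _ a b ha hb hab
      have := (hconv i).2 (Set.mem_univ (-x)) (Set.mem_univ (-y)) ha hb hab
      simp only [hg, smul_eq_mul] at this ⊢
      have harg : -(a * x + b * y) = a * -x + b * -y := by ring
      rw [harg]
      exact this
    set G : ℝ → ℝ := fun x => F (-x) with hG
    have hGF : ∀ r, G r =
        (Finset.univ : Finset (Fin m)).sup'
          (Finset.univ_nonempty_iff.2 ⟨⟨0, hm⟩⟩) (fun i => g i r) := by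
      intro r
      simpa [hG, hg] using hF (-r)
    have hGmin : ∀ r : ℝ, G (-rstar) ≤ G r := by
      intro r
      simpa [hG] using hmin (-r)
    obtain ⟨j, hj1, hj2⟩ := aux_right hm g hgconv G hGF (-rstar) hGmin
    refine ⟨j, ?_, ?_⟩
    · simpa [hg, hG] using hj1
    · intro r hr
      have := hj2 (-r) (by linarith)
      simpa [hg, hG] using this
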